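/- If every subset A ⊆ I_m with |A| ≤ l is absorbing for a PSO of order l, then every subset of I_m is absorbing. -/

import Mathlib

def nullSet {m : ℕ} (x : Fin m → ℝ) : Set (Fin m) := {k | x k = 0}

def Absorbing (m l : ℕ) (P : (Fin l → Fin m) → Fin m → ℝ) (A : Set (Fin m)) : Prop :=
  Aᶜ = ⋂ i ∈ {i : Fin l → Fin m | ∀ s, i s ∈ A}, nullSet (P i)

/-- Proposition 3.1: if every subset `A ⊆ I_m` with `|A| ≤ l` is absorbing,
then every subset of `I_m` is absorbing. -/
theorem all_absorbing_of_small_absorbing (m l : ℕ)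
    (P : (Fin l → Fin m) → Fin m → ℝ)
    (hP : ∀ i, P i ∈ stdSimplex ℝ (Fin m))
    (hsym : ∀ (i : Fin l → Fin m) (π : Equiv.Perm (Fin l)), P (i ∘ π) = P i)
    (hsmall : ∀ A : Finset (Fin m), A.card ≤ l → Absorbing m l P ↑A) :
    ∀ B : Set (Fin m), Absorbing m l P B := by
  intro B
  unfold Absorbing
  ext k
  simp only [Set.mem_compl_iff, Set.mem_iInter, Set.mem_setOf_eq, nullSet]
  constructor
  · intro hk i hi
    set A : Finset (Fin m) := Finset.image i Finset.univ with hAdef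
    have hcard : A.card ≤ l := by
      calc A.card ≤ Finset.univ.card := Finset.card_image_le
        _ = l := by simp
    have hA := hsmall A hcard
    have hkA : k ∈ (↑A : Set (Fin m))ᶜ := by
      simp only [Set.mem_compl_iff, hAdef, Finset.coe_image, Set.mem_image]
      rintro ⟨s, -, rfl⟩
      exact hk (hi s)
    rw [hA] at hkA
    simp only [Set.mem_iInter, Set.mem_setOf_eq, nullSet] at hkA
    exact hkA i (fun s => by simp [hAdef])
  · intro h hkB
    rcases Nat.eq_zero_or_pos l with hl | hl
    · subst hl
      have hA := hsmall ∅ (by simp)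
      have hu : ∀ k' : Fin m, P (fun s => s.elim0) k' = 0 := by
        intro k'
        have hk' : k' ∈ (↑(∅ : Finset (Fin m)) : Set (Fin m))ᶜ := by simp
        rw [hA] at hk'
        simp only [Set.mem_iInter, Set.mem_setOf_eq, nullSet] at hk'
        have := hk' (fun s => s.elim0) (fun s => s.elim0)
        convert this using 2
      have hsum := (hP (fun s => s.elim0)).2
      rw [Finset.sum_eq_zero (fun k' _ => hu k')] at hsum
      norm_num at hsum
    · have hA := hsmall {k} (by simp only [Finset.card_singleton]; exact hl)
      have hk1 : k ∉ (↑({k} : Finset (Fin m)) : Set (Fin m))ᶜ := by simp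
      rw [hA] at hk1
      simp only [Set.mem_iInter, Set.mem_setOf_eq, nullSet, not_forall] at hk1
      obtain ⟨i, hi, hne⟩ := hk1
      refine hne (h i (fun s => ?_))
      have := hi s
      simp only [Finset.coe_singleton, Set.mem_singleton_iff] at this
      rw [this]; exact hkB
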